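/- Let k ≥ 1, let γ_1 < γ_2 < … < γ_{k+1} be real labels, and let ρ : ℝ → ℝ. Then the infimum of ρ over the interval [γ_1, γ_{k+1}] equals the infimum of the lifted dataterm ρ_lift over ℝ^k: inf_{t ∈ [γ_1, γ_{k+1}]} ρ(t) = inf_{u ∈ ℝ^k} ρ_lift(u), where ρ_lift(u) = min_{1≤i≤k} ρ_i(u). -/

import Mathlib

/-- `1_i^α` (with 0-based interval index `i`): first `i` entries 1, entry `i` equals `α`,
remaining entries 0.  This is `α • 1_{i+1} + (1-α) • 1_i` in the 0-based numbering of `onevec`. -/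
noncomputable def liftvec {k : ℕ} (i : Fin k) (α : ℝ) : Fin k → ℝ :=
  fun j => if (j : ℕ) < (i : ℕ) then 1 else if j = i then α else 0

/-- `γ_i^α = γ_i + α (γ_{i+1} - γ_i)`, with 0-based interval index `i`. -/
noncomputable def gammaAff {k : ℕ} (γ : Fin (k+1) → ℝ) (i : Fin k) (α : ℝ) : ℝ :=
  γ i.castSucc + α * (γ i.succ - γ i.castSucc)

/-- The lifted piece `ρ_i` : equals `ρ(γ_i^α)` if `u = 1_i^α` for some `α ∈ [0,1]`,
and `+∞` otherwise (the set below is a singleton or empty, and `sInf ∅ = ⊤` in `EReal`). -/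
noncomputable def rhoPiece {k : ℕ} (γ : Fin (k+1) → ℝ) (ρ : ℝ → ℝ) (i : Fin k)
    (u : Fin k → ℝ) : EReal :=
  sInf {c : EReal | ∃ α ∈ Set.Icc (0:ℝ) 1, u = liftvec i α ∧ c = (ρ (gammaAff γ i α) : EReal)}

lemma exists_interval {k : ℕ} (hk : 1 ≤ k) (γ : Fin (k+1) → ℝ) (hγ : StrictMono γ)
    (t : ℝ) (h0 : γ 0 ≤ t) (h1 : t ≤ γ (Fin.last k)) :
    ∃ i : Fin k, γ i.castSucc ≤ t ∧ t ≤ γ i.succ := by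
  classical
  set S : Finset (Fin (k+1)) := Finset.univ.filter (fun j => γ j ≤ t) with hS
  have h0S : (0 : Fin (k+1)) ∈ S := by simp [hS, h0]
  have hne : S.Nonempty := ⟨0, h0S⟩
  set m := S.max' hne with hm
  have hmS : m ∈ S := S.max'_mem hne
  have hmt : γ m ≤ t := by simpa [hS] using hmS
  by_cases hmk : (m : ℕ) < k
  · refine ⟨⟨m, hmk⟩, ?_, ?_⟩
    · have : (⟨m, hmk⟩ : Fin k).castSucc = m := by
        ext; simp
      rw [this]; exact hmt
    · by_contra h
      push_neg at h
      have hmem : (⟨m, hmk⟩ : Fin k).succ ∈ S := by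
        simp [hS]; exact h.le
      have := S.le_max' _ hmem
      rw [← hm] at this
      have : ((⟨m, hmk⟩ : Fin k).succ : ℕ) ≤ (m : ℕ) := this
      simp at this
  · have hml : m = Fin.last k := by
      ext
      have := m.isLt
      simpa using Nat.le_antisymm (by omega) (by omega)
    have hteq : t = γ (Fin.last k) := le_antisymm h1 (hml ▸ hmt)
    refine ⟨⟨k - 1, by omega⟩, ?_, ?_⟩
    · calc γ _ ≤ γ (Fin.last k) := hγ.monotone (Fin.le_last _)
        _ = t := hteq.symm
    · have : (⟨k - 1, by omega⟩ : Fin k).succ = Fin.last k := by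
        ext; simp; omega
      rw [this, ← hteq]

theorem inf_rho_eq_inf_lift {k : ℕ} (hk : 1 ≤ k) (γ : Fin (k+1) → ℝ) (hγ : StrictMono γ)
    (ρ : ℝ → ℝ) :
    ⨅ t ∈ Set.Icc (γ 0) (γ (Fin.last k)), (ρ t : EReal)
      = ⨅ u : Fin k → ℝ, ⨅ i : Fin k, rhoPiece γ ρ i u := by
  apply le_antisymm
  · refine le_iInf fun u => le_iInf fun i => le_sInf ?_
    rintro c ⟨α, ⟨hα0, hα1⟩, -, rfl⟩
    have hd : (0:ℝ) ≤ γ i.succ - γ i.castSucc :=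
      sub_nonneg.2 (hγ.monotone (Fin.castSucc_le_succ i))
    have hmem : gammaAff γ i α ∈ Set.Icc (γ 0) (γ (Fin.last k)) := by
      constructor
      · calc γ 0 ≤ γ i.castSucc := hγ.monotone (Fin.zero_le _)
          _ ≤ gammaAff γ i α := le_add_of_nonneg_right (mul_nonneg hα0 hd)
      · calc gammaAff γ i α ≤ γ i.castSucc + 1 * (γ i.succ - γ i.castSucc) := by
              unfold gammaAff
              gcongr
          _ = γ i.succ := by ring
          _ ≤ γ (Fin.last k) := hγ.monotone (Fin.le_last _)
    exact biInf_le _ hmem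
  · refine le_iInf₂ fun t ht => ?_
    obtain ⟨i, hit, hti⟩ := exists_interval hk γ hγ t ht.1 ht.2
    have hd : (0:ℝ) < γ i.succ - γ i.castSucc :=
      sub_pos.2 (hγ (Fin.castSucc_lt_succ (i := i)))
    set α := (t - γ i.castSucc) / (γ i.succ - γ i.castSucc) with hα
    have hα01 : α ∈ Set.Icc (0:ℝ) 1 := by
      constructor
      · exact div_nonneg (sub_nonneg.2 hit) hd.le
      · rw [hα, div_le_one hd]
        linarith
    have hgam : gammaAff γ i α = t := by
      unfold gammaAff
      rw [hα, div_mul_cancel₀]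
      · ring
      · exact hd.ne'
    calc ⨅ u : Fin k → ℝ, ⨅ j : Fin k, rhoPiece γ ρ j u
        ≤ ⨅ j : Fin k, rhoPiece γ ρ j (liftvec i α) := iInf_le _ _
      _ ≤ rhoPiece γ ρ i (liftvec i α) := iInf_le _ _
      _ ≤ (ρ t : EReal) := sInf_le ⟨α, hα01, rfl, by rw [hgam]⟩
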